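/- (Stability of the distance to the bad sets under perturbation.) Let r' ≥ r ≥ 2, n ≥ 2, m ∈ {1,…,n−1} and s ∈ {1,…,r−1} be integers, and let τ > 0. There exist constants ε* > 0, χ > 0 and ζ > 0, depending only on (r', r, s, m, n, τ), such that for every Q ∈ 𝒫*(r',n) with ‖Q_r − 𝒱(r,s,m,n)‖_∞ > τ, every ε ∈ [0,ε*] and every S ∈ 𝒫*(r',n) with ‖S − Q‖_∞ ≤ ε, one has: (i) ‖S_r − 𝒱(r,s,m,n)‖_∞ > χ; and (ii) for every real n×m matrix A with orthonormal columns, all orthogonal to ∇S(0), the restricted polynomial x ↦ S_r(Ax) ∈ 𝒫(r,m) satisfies ‖S_r(A·) − Σ(r,s,m)‖_∞ > ζ. -/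

import Mathlib

open MvPolynomial Metric Set Matrix
open scoped RealInnerProductSpace

noncomputable section

/-- `𝒫(r,n)`: polynomials in `n` real variables with zero constant term and
total degree at most `r`. -/
def PolySpace (r n : ℕ) : Set (MvPolynomial (Fin n) ℝ) :=
  {P | P.coeff 0 = 0 ∧ P.totalDegree ≤ r}

/-- Sup-norm of the coefficients of a polynomial. -/
def polyNorm {n : ℕ} (P : MvPolynomial (Fin n) ℝ) : ℝ :=
  ⨆ μ : Fin n →₀ ℕ, |P.coeff μ|

/-- The vector of partial derivatives (the gradient) of a polynomial at a point. -/
def polyGrad {n : ℕ} (P : MvPolynomial (Fin n) ℝ) (x : Fin n → ℝ) : Fin n → ℝ :=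
  fun i => eval x (pderiv i P)

/-- `𝒫*(r,n)`: elements of `𝒫(r,n)` with nonzero gradient at the origin. -/
def PolySpaceStar (r n : ℕ) : Set (MvPolynomial (Fin n) ℝ) :=
  {P | P ∈ PolySpace r n ∧ polyGrad P 0 ≠ 0}

/-- The `s`-truncation parametrized by the `i`-th coordinate with coefficients `a`:
the curve whose `i`-th component is `t` and whose `j`-th component (`j ≠ i`) is
`∑_{k=1}^{s} a_{jk} t^k`. -/
def truncCurve {m : ℕ} (s : ℕ) (i : Fin m) (a : Fin m → Fin s → ℝ) : ℝ → Fin m → ℝ :=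
  fun t j => if j = i then t else ∑ k : Fin s, a j k * t ^ ((k : ℕ) + 1)

/-- `P` satisfies the `s`-vanishing condition on the curve `γ`. -/
def SVanishing {m : ℕ} (s : ℕ) (P : MvPolynomial (Fin m) ℝ) (γ : ℝ → Fin m → ℝ) : Prop :=
  ∀ ℓ : Fin m, ∀ α ≤ s, iteratedDeriv α (fun t => eval (γ t) (pderiv ℓ P)) 0 = 0

/-- `σ^i(r,s,m)`: polynomials of `𝒫(r,m)` that satisfy the `s`-vanishing condition on
some `s`-truncation parametrized by the `i`-th coordinate. -/
def sigmaI (r s m : ℕ) (i : Fin m) : Set (MvPolynomial (Fin m) ℝ) :=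
  {P | P ∈ PolySpace r m ∧ ∃ a : Fin m → Fin s → ℝ, SVanishing s P (truncCurve s i a)}

/-- `σ(r,s,m)`. -/
def sigmaSet (r s m : ℕ) : Set (MvPolynomial (Fin m) ℝ) :=
  ⋃ i : Fin m, sigmaI r s m i

/-- Closure with respect to the coefficient sup-norm. -/
def closureNorm {n : ℕ} (A : Set (MvPolynomial (Fin n) ℝ)) : Set (MvPolynomial (Fin n) ℝ) :=
  {P | ∀ ε > (0:ℝ), ∃ Q ∈ A, polyNorm (P - Q) < ε}

/-- `Σ(r,s,m)`: the closure of the set of `s`-vanishing polynomials. -/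
def SigmaCl (r s m : ℕ) : Set (MvPolynomial (Fin m) ℝ) :=
  closureNorm (sigmaSet r s m)

/-- The restriction `x ↦ Q(Ax)` of `Q` to the span of the columns of `A`. -/
def restrictPoly {n m : ℕ} (A : Matrix (Fin n) (Fin m) ℝ) (Q : MvPolynomial (Fin n) ℝ) :
    MvPolynomial (Fin m) ℝ :=
  aeval (fun i : Fin n => ∑ j : Fin m, C (A i j) * X j) Q

/-- The bad set `𝒱(r,s,m,n)`: polynomials of `𝒫*(r,n)` whose restriction to the span of
the (orthonormal) columns of some matrix `A` lies in `Σ(r,s,m)`. -/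
def badV (r s m n : ℕ) : Set (MvPolynomial (Fin n) ℝ) :=
  {Q | Q ∈ PolySpaceStar r n ∧
    ∃ A : Matrix (Fin n) (Fin m) ℝ, Aᵀ * A = 1 ∧ restrictPoly A Q ∈ SigmaCl r s m}

/-- The truncation of `Q` at total degree `r`: all monomials of total degree greater
than `r` are discarded. -/
def truncatePoly {n : ℕ} (r : ℕ) (Q : MvPolynomial (Fin n) ℝ) : MvPolynomial (Fin n) ℝ :=
  ∑ μ ∈ Q.support.filter (fun μ => (∑ i, μ i) ≤ r), monomial μ (Q.coeff μ)

namespace Aux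
variable {n : ℕ}

def l1 (P : MvPolynomial (Fin n) ℝ) : ℝ := ∑ μ ∈ P.support, |P.coeff μ|

lemma l1_nonneg (P : MvPolynomial (Fin n) ℝ) : 0 ≤ l1 P :=
  Finset.sum_nonneg fun _ _ => abs_nonneg _

lemma sum_abs_coeff_le (P : MvPolynomial (Fin n) ℝ) (B : Finset (Fin n →₀ ℕ)) :
    ∑ μ ∈ B, |P.coeff μ| ≤ l1 P := by
  rw [show ∑ μ ∈ B, |P.coeff μ| = ∑ μ ∈ B ∩ P.support, |P.coeff μ| from
    (Finset.sum_subset Finset.inter_subset_left (fun μ hμ hμ' => by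
      have : μ ∉ P.support := fun h => hμ' (Finset.mem_inter.2 ⟨hμ, h⟩)
      simp [MvPolynomial.notMem_support_iff.mp this])).symm]
  exact Finset.sum_le_sum_of_subset_of_nonneg Finset.inter_subset_right
    (fun _ _ _ => abs_nonneg _)

lemma abs_coeff_le_l1 (P : MvPolynomial (Fin n) ℝ) (μ : Fin n →₀ ℕ) :
    |P.coeff μ| ≤ l1 P := by
  simpa using sum_abs_coeff_le P {μ}

lemma l1_add_le (P Q : MvPolynomial (Fin n) ℝ) : l1 (P + Q) ≤ l1 P + l1 Q := by
  calc l1 (P + Q) = ∑ μ ∈ (P + Q).support, |P.coeff μ + Q.coeff μ| := by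
        simp [l1, MvPolynomial.coeff_add]
    _ ≤ ∑ μ ∈ (P + Q).support, (|P.coeff μ| + |Q.coeff μ|) :=
        Finset.sum_le_sum fun μ _ => abs_add_le _ _
    _ = ∑ μ ∈ (P + Q).support, |P.coeff μ| + ∑ μ ∈ (P + Q).support, |Q.coeff μ| :=
        Finset.sum_add_distrib
    _ ≤ l1 P + l1 Q := add_le_add (sum_abs_coeff_le _ _) (sum_abs_coeff_le _ _)

lemma l1_zero : l1 (0 : MvPolynomial (Fin n) ℝ) = 0 := by simp [l1]

lemma l1_monomial_le (μ : Fin n →₀ ℕ) (c : ℝ) : l1 (monomial μ c) ≤ |c| := by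
  by_cases hc : c = 0
  · simp [hc, l1_zero]
  · simp [l1, MvPolynomial.support_monomial, hc]

lemma l1_one : l1 (1 : MvPolynomial (Fin n) ℝ) ≤ 1 := by
  simpa using l1_monomial_le (0 : Fin n →₀ ℕ) (1 : ℝ)

lemma l1_mul_le (P Q : MvPolynomial (Fin n) ℝ) : l1 (P * Q) ≤ l1 P * l1 Q := by
  classical
  have key : ∀ ν, |(P * Q).coeff ν| ≤
      ∑ x ∈ Finset.HasAntidiagonal.antidiagonal ν, |P.coeff x.1| * |Q.coeff x.2| := by
    intro ν
    rw [MvPolynomial.coeff_mul]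
    exact (Finset.abs_sum_le_sum_abs _ _).trans (le_of_eq (by simp [abs_mul]))
  calc l1 (P * Q) ≤ ∑ ν ∈ (P * Q).support,
        ∑ x ∈ Finset.HasAntidiagonal.antidiagonal ν, |P.coeff x.1| * |Q.coeff x.2| :=
        Finset.sum_le_sum fun ν _ => key ν
    _ = ∑ ν ∈ (P * Q).support,
        ∑ x ∈ (Finset.HasAntidiagonal.antidiagonal ν ∩ P.support ×ˢ Q.support),
          |P.coeff x.1| * |Q.coeff x.2| := by
        refine Finset.sum_congr rfl fun ν _ => (Finset.sum_subset Finset.inter_subset_left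
          (fun x hx hx' => ?_)).symm
        have : x.1 ∉ P.support ∨ x.2 ∉ Q.support := by
          by_contra h
          push_neg at h
          exact hx' (Finset.mem_inter.2 ⟨hx, Finset.mem_product.2 ⟨h.1, h.2⟩⟩)
        rcases this with h | h <;>
          simp [MvPolynomial.notMem_support_iff.mp h]
    _ = ∑ x ∈ (P * Q).support.biUnion
          (fun ν => Finset.HasAntidiagonal.antidiagonal ν ∩ P.support ×ˢ Q.support),
          |P.coeff x.1| * |Q.coeff x.2| := by
        refine (Finset.sum_biUnion ?_).symm
        intro ν₁ _ ν₂ _ hne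
        refine Finset.disjoint_left.2 fun x hx₁ hx₂ => hne ?_
        have h1 := Finset.HasAntidiagonal.mem_antidiagonal.1 (Finset.mem_inter.1 hx₁).1
        have h2 := Finset.HasAntidiagonal.mem_antidiagonal.1 (Finset.mem_inter.1 hx₂).1
        rw [← h1, ← h2]
    _ ≤ ∑ x ∈ P.support ×ˢ Q.support, |P.coeff x.1| * |Q.coeff x.2| := by
        refine Finset.sum_le_sum_of_subset_of_nonneg ?_
          (fun _ _ _ => mul_nonneg (abs_nonneg _) (abs_nonneg _))
        intro x hx
        exact (Finset.mem_inter.1 (Finset.mem_biUnion.1 hx).choose_spec.2).2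
    _ = l1 P * l1 Q := by rw [l1, l1, Finset.sum_mul_sum, Finset.sum_product]

lemma l1_pow_le (P : MvPolynomial (Fin n) ℝ) (k : ℕ) : l1 (P ^ k) ≤ l1 P ^ k := by
  induction k with
  | zero => simpa using l1_one
  | succ k ih =>
    calc l1 (P ^ (k + 1)) = l1 (P * P ^ k) := by ring_nf
      _ ≤ l1 P * l1 (P ^ k) := l1_mul_le _ _
      _ ≤ l1 P * l1 P ^ k := by
          exact mul_le_mul_of_nonneg_left ih (l1_nonneg P)
      _ = l1 P ^ (k + 1) := by ring

lemma l1_sum_le {ι : Type*} (s : Finset ι) (f : ι → MvPolynomial (Fin n) ℝ) :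
    l1 (∑ i ∈ s, f i) ≤ ∑ i ∈ s, l1 (f i) := by
  classical
  induction s using Finset.cons_induction with
  | empty => simp [l1_zero]
  | cons a s ha ih =>
    rw [Finset.sum_cons, Finset.sum_cons]
    exact (l1_add_le _ _).trans (add_le_add (le_refl _) ih)

lemma l1_prod_le {ι : Type*} (s : Finset ι) (f : ι → MvPolynomial (Fin n) ℝ) :
    l1 (∏ i ∈ s, f i) ≤ ∏ i ∈ s, l1 (f i) := by
  classical
  induction s using Finset.cons_induction with
  | empty => simpa using l1_one
  | cons a s ha ih =>
    rw [Finset.prod_cons, Finset.prod_cons]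
    exact (l1_mul_le _ _).trans
      (mul_le_mul_of_nonneg_left ih (l1_nonneg _) |>.trans
        (le_of_eq rfl))

end Aux

namespace Aux

variable {n : ℕ}

lemma bddAbove_coeff (P : MvPolynomial (Fin n) ℝ) :
    BddAbove (Set.range fun μ => |P.coeff μ|) := by
  refine ⟨l1 P, ?_⟩
  rintro x ⟨μ, rfl⟩
  exact abs_coeff_le_l1 P μ

lemma abs_coeff_le_polyNorm (P : MvPolynomial (Fin n) ℝ) (μ : Fin n →₀ ℕ) :
    |P.coeff μ| ≤ polyNorm P :=
  le_ciSup (bddAbove_coeff P) μ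

lemma polyNorm_nonneg (P : MvPolynomial (Fin n) ℝ) : 0 ≤ polyNorm P :=
  (abs_nonneg _).trans (abs_coeff_le_polyNorm P 0)

lemma polyNorm_le {P : MvPolynomial (Fin n) ℝ} {c : ℝ}
    (h : ∀ μ, |P.coeff μ| ≤ c) : polyNorm P ≤ c :=
  ciSup_le h

lemma polyNorm_le_l1 (P : MvPolynomial (Fin n) ℝ) : polyNorm P ≤ l1 P :=
  polyNorm_le fun μ => abs_coeff_le_l1 P μ

lemma polyNorm_add_le (P Q : MvPolynomial (Fin n) ℝ) :
    polyNorm (P + Q) ≤ polyNorm P + polyNorm Q := by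
  refine polyNorm_le fun μ => ?_
  rw [MvPolynomial.coeff_add]
  exact (abs_add_le _ _).trans
    (add_le_add (abs_coeff_le_polyNorm P μ) (abs_coeff_le_polyNorm Q μ))

lemma polyNorm_neg (P : MvPolynomial (Fin n) ℝ) : polyNorm (-P) = polyNorm P := by
  unfold polyNorm
  refine iSup_congr fun μ => ?_
  rw [MvPolynomial.coeff_neg, abs_neg]

lemma coeff_truncatePoly (r : ℕ) (Q : MvPolynomial (Fin n) ℝ) (μ : Fin n →₀ ℕ) :
    (truncatePoly r Q).coeff μ = if (∑ i, μ i) ≤ r then Q.coeff μ else 0 := by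
  classical
  unfold truncatePoly
  rw [MvPolynomial.coeff_sum]
  simp only [MvPolynomial.coeff_monomial]
  rw [Finset.sum_ite_eq' (Q.support.filter fun μ => (∑ i, μ i) ≤ r) μ (fun ν => Q.coeff ν)]
  by_cases h : (∑ i, μ i) ≤ r
  · by_cases hμ : μ ∈ Q.support
    · simp [h, hμ]
    · simp [h, hμ, MvPolynomial.notMem_support_iff.mp hμ]
  · simp [h]

lemma finsuppSum_eq (μ : Fin n →₀ ℕ) : (μ.sum fun _ e => e) = ∑ i, μ i :=
  Finsupp.sum_fintype _ _ (fun _ => rfl)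

lemma totalDegree_le_of_coeff {P : MvPolynomial (Fin n) ℝ} {r : ℕ}
    (h : ∀ μ : Fin n →₀ ℕ, ¬ (∑ i, μ i) ≤ r → P.coeff μ = 0) : P.totalDegree ≤ r := by
  refine Finset.sup_le fun μ hμ => ?_
  rw [finsuppSum_eq]
  by_contra hc
  exact MvPolynomial.mem_support_iff.mp hμ (h μ hc)

lemma coeff_eq_zero_of_totalDegree {P : MvPolynomial (Fin n) ℝ} {r : ℕ}
    (hP : P.totalDegree ≤ r) {μ : Fin n →₀ ℕ} (h : ¬ (∑ i, μ i) ≤ r) :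
    P.coeff μ = 0 := by
  by_contra hc
  have := MvPolynomial.le_totalDegree (p := P) (s := μ)
    (MvPolynomial.mem_support_iff.mpr hc)
  rw [finsuppSum_eq] at this
  exact h (this.trans hP)

lemma totalDegree_truncate_le (r : ℕ) (Q : MvPolynomial (Fin n) ℝ) :
    (truncatePoly r Q).totalDegree ≤ r := by
  refine totalDegree_le_of_coeff fun μ h => ?_
  rw [coeff_truncatePoly, if_neg h]

lemma totalDegree_sub_le (P Q : MvPolynomial (Fin n) ℝ) :
    (P - Q).totalDegree ≤ max P.totalDegree Q.totalDegree := by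
  rw [sub_eq_add_neg]
  exact (MvPolynomial.totalDegree_add _ _).trans
    (by rw [MvPolynomial.totalDegree_neg])

end Aux

namespace Aux

variable {n m : ℕ}

lemma constantCoeff_aeval (g : Fin m → MvPolynomial (Fin n) ℝ)
    (P : MvPolynomial (Fin m) ℝ) :
    constantCoeff (aeval g P) = eval (fun j => constantCoeff (g j)) P := by
  induction P using MvPolynomial.induction_on with
  | C c => simp [MvPolynomial.algebraMap_eq]
  | add p q hp hq => simp only [_root_.map_add, hp, hq]
  | mul_X p j hp => simp only [_root_.map_mul, MvPolynomial.aeval_X, MvPolynomial.eval_X, hp]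

lemma constantCoeff_aeval_of_zero {g : Fin m → MvPolynomial (Fin n) ℝ}
    (hg : ∀ j, constantCoeff (g j) = 0) (P : MvPolynomial (Fin m) ℝ) :
    constantCoeff (aeval g P) = constantCoeff P := by
  rw [constantCoeff_aeval]
  have : (fun j => constantCoeff (g j)) = (0 : Fin m → ℝ) := funext hg
  rw [this, MvPolynomial.eval_zero]

lemma grad_aeval {g : Fin m → MvPolynomial (Fin n) ℝ}
    (hg : ∀ j, constantCoeff (g j) = 0) (P : MvPolynomial (Fin m) ℝ) (i : Fin n) :
    constantCoeff (pderiv i (aeval g P)) =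
      ∑ j, constantCoeff (pderiv i (g j)) * constantCoeff (pderiv j P) := by
  classical
  induction P using MvPolynomial.induction_on with
  | C c => simp [MvPolynomial.algebraMap_eq, MvPolynomial.pderiv_C]
  | add p q hp hq =>
    simp only [_root_.map_add, hp, hq, mul_add, Finset.sum_add_distrib]
  | mul_X p j hp =>
    rw [_root_.map_mul, MvPolynomial.aeval_X, MvPolynomial.pderiv_mul, _root_.map_add,
      _root_.map_mul, _root_.map_mul, hg j, mul_zero, zero_add,
      constantCoeff_aeval_of_zero hg]
    have hrhs : ∀ j' : Fin m, constantCoeff (pderiv j' (p * X j)) =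
        constantCoeff p * (if j = j' then 1 else 0) := by
      intro j'
      rw [MvPolynomial.pderiv_mul, _root_.map_add, _root_.map_mul, _root_.map_mul,
        MvPolynomial.constantCoeff_X, mul_zero, zero_add, MvPolynomial.pderiv_X]
      by_cases h : j = j'
      · subst h; simp [Pi.single_eq_same]
      · simp [Pi.single_eq_of_ne (Ne.symm h), h]
    simp only [hrhs, mul_ite, mul_one, mul_zero]
    simp [Finset.sum_ite_eq, mul_comm]

lemma totalDegree_aeval_le {g : Fin m → MvPolynomial (Fin n) ℝ}
    (hg : ∀ j, (g j).totalDegree ≤ 1) (P : MvPolynomial (Fin m) ℝ) :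
    (aeval g P).totalDegree ≤ P.totalDegree := by
  classical
  conv_lhs => rw [← MvPolynomial.support_sum_monomial_coeff P]
  rw [map_sum]
  refine MvPolynomial.totalDegree_finsetSum_le fun μ hμ => ?_
  rw [MvPolynomial.aeval_monomial]
  refine (MvPolynomial.totalDegree_mul _ _).trans ?_
  have h1 : (algebraMap ℝ (MvPolynomial (Fin n) ℝ) (P.coeff μ)).totalDegree = 0 := by
    rw [MvPolynomial.algebraMap_eq]; exact MvPolynomial.totalDegree_C _
  rw [h1, zero_add]
  refine le_trans ?_ (MvPolynomial.le_totalDegree hμ)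
  rw [Finsupp.prod]
  refine (MvPolynomial.totalDegree_finset_prod _ _).trans ?_
  rw [Finsupp.sum]
  refine Finset.sum_le_sum fun j _ => ?_
  exact (MvPolynomial.totalDegree_pow _ _).trans
    (by simpa using Nat.mul_le_mul_left (μ j) (hg j))

lemma l1_aeval_le {g : Fin m → MvPolynomial (Fin n) ℝ} {c : ℝ} (hc : 1 ≤ c)
    (hg : ∀ j, l1 (g j) ≤ c) {r : ℕ} {P : MvPolynomial (Fin m) ℝ}
    (hP : P.totalDegree ≤ r) :
    l1 (aeval g P) ≤
      ((Finset.Iic (Finsupp.equivFunOnFinite.symm (fun _ : Fin m => r))).card : ℝ)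
        * c ^ r * polyNorm P := by
  classical
  have hc0 : (0:ℝ) ≤ c := le_trans zero_le_one hc
  conv_lhs => rw [← MvPolynomial.support_sum_monomial_coeff P, map_sum]
  refine (l1_sum_le _ _).trans ?_
  have hterm : ∀ μ ∈ P.support,
      l1 (aeval g (monomial μ (P.coeff μ))) ≤ c ^ r * polyNorm P := by
    intro μ hμ
    rw [MvPolynomial.aeval_monomial, MvPolynomial.algebraMap_eq]
    refine (l1_mul_le _ _).trans ?_
    have h2 : l1 ((MvPolynomial.C (P.coeff μ) : MvPolynomial (Fin n) ℝ)) ≤ |P.coeff μ| := by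
      rw [MvPolynomial.C_apply]; exact l1_monomial_le _ _
    have h3 : l1 (μ.prod fun j k => g j ^ k) ≤ c ^ r := by
      rw [Finsupp.prod]
      refine (l1_prod_le _ _).trans ?_
      have h4 : ∀ j ∈ μ.support, l1 (g j ^ μ j) ≤ c ^ μ j := fun j _ =>
        (l1_pow_le _ _).trans (pow_le_pow_left₀ (l1_nonneg _) (hg j) _)
      refine (Finset.prod_le_prod (fun j _ => l1_nonneg _) h4).trans ?_
      rw [Finset.prod_pow_eq_pow_sum]
      refine pow_le_pow_right₀ hc ?_
      have := MvPolynomial.le_totalDegree hμ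
      rw [Finsupp.sum] at this
      exact this.trans hP
    calc l1 (MvPolynomial.C (P.coeff μ)) * l1 (μ.prod fun j k => g j ^ k)
        ≤ |P.coeff μ| * c ^ r :=
          mul_le_mul h2 h3 (l1_nonneg _) (abs_nonneg _)
      _ ≤ polyNorm P * c ^ r :=
          mul_le_mul_of_nonneg_right (abs_coeff_le_polyNorm P μ) (pow_nonneg hc0 r)
      _ = c ^ r * polyNorm P := mul_comm _ _
  refine (Finset.sum_le_sum hterm).trans ?_
  rw [Finset.sum_const, nsmul_eq_mul, mul_assoc]
  refine mul_le_mul_of_nonneg_right ?_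
    (mul_nonneg (pow_nonneg hc0 r) (polyNorm_nonneg P))
  have hsub : P.support ⊆ Finset.Iic (Finsupp.equivFunOnFinite.symm (fun _ : Fin m => r)) := by
    intro μ hμ
    rw [Finset.mem_Iic]
    intro j
    have h5 : μ j ≤ μ.sum fun _ e => e := by
      rw [Finsupp.sum]
      by_cases hj : j ∈ μ.support
      · exact Finset.single_le_sum (f := fun j => μ j) (fun _ _ => Nat.zero_le _) hj
      · simp [Finsupp.notMem_support_iff.mp hj]
    simp only [Finsupp.coe_equivFunOnFinite_symm]
    exact h5.trans ((MvPolynomial.le_totalDegree hμ).trans hP)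
  exact_mod_cast Nat.cast_le.mpr (Finset.card_le_card hsub)

end Aux

namespace Aux

variable {n m : ℕ}

lemma C_mul_X_eq (a : ℝ) (i : Fin n) :
    (C a * X i : MvPolynomial (Fin n) ℝ) = monomial (Finsupp.single i 1) a := by
  rw [MvPolynomial.C_apply, MvPolynomial.X, MvPolynomial.monomial_mul, zero_add, mul_one]

def LS {p q : ℕ} (B : Fin p → Fin q → ℝ) : Fin p → MvPolynomial (Fin q) ℝ :=
  fun j => ∑ i, C (B j i) * X i

lemma LS_cc {p q : ℕ} (B : Fin p → Fin q → ℝ) (j : Fin p) :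
    constantCoeff (LS B j) = 0 := by
  simp [LS, _root_.map_sum]

lemma LS_l1 {p q : ℕ} (B : Fin p → Fin q → ℝ) (j : Fin p)
    (hB : ∀ i, |B j i| ≤ 1) : l1 (LS B j) ≤ q := by
  refine (l1_sum_le _ _).trans ?_
  have : ∀ i : Fin q, l1 (C (B j i) * X i) ≤ 1 := fun i => by
    rw [C_mul_X_eq]
    exact (l1_monomial_le _ _).trans (hB i)
  calc ∑ i, l1 (C (B j i) * X i) ≤ ∑ _i : Fin q, (1:ℝ) := Finset.sum_le_sum fun i _ => this i
    _ = q := by simp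

lemma LS_deg {p q : ℕ} (B : Fin p → Fin q → ℝ) (j : Fin p) :
    (LS B j).totalDegree ≤ 1 := by
  refine MvPolynomial.totalDegree_finsetSum_le fun i _ => ?_
  rw [C_mul_X_eq]
  refine (MvPolynomial.totalDegree_monomial_le _ _).trans ?_
  rw [Finsupp.sum_single_index] <;> rfl

lemma LS_grad {p q : ℕ} (B : Fin p → Fin q → ℝ) (j : Fin p) (i : Fin q) :
    constantCoeff (pderiv i (LS B j)) = B j i := by
  classical
  rw [LS, _root_.map_sum, _root_.map_sum]
  have : ∀ i' : Fin q, constantCoeff (pderiv i (C (B j i') * X i')) =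
      if i = i' then B j i' else 0 := by
    intro i'
    rw [MvPolynomial.pderiv_C_mul, _root_.map_mul, MvPolynomial.constantCoeff_C,
      MvPolynomial.pderiv_X]
    by_cases h : i = i'
    · subst h; simp [Pi.single_eq_same]
    · simp [Pi.single_eq_of_ne (Ne.symm h), h]
  simp only [this]
  simp [Finset.sum_ite_eq]

lemma cc_pderiv_eq_coeff_single (P : MvPolynomial (Fin n) ℝ) (i : Fin n) :
    constantCoeff (pderiv i P) = P.coeff (Finsupp.single i 1) := by
  classical
  induction P using MvPolynomial.induction_on' with
  | add p q hp hq => simp only [_root_.map_add, MvPolynomial.coeff_add, hp, hq]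
  | monomial μ c =>
    rw [MvPolynomial.pderiv_monomial, MvPolynomial.constantCoeff_monomial,
      MvPolynomial.coeff_monomial]
    by_cases hμ : μ = Finsupp.single i 1
    · subst hμ
      simp
    · rw [if_neg hμ]
      by_cases h0 : μ - Finsupp.single i 1 = 0
      · rw [if_pos h0]
        have hle : μ ≤ Finsupp.single i 1 := tsub_eq_zero_iff_le.mp h0
        have hi : μ i ≤ 1 := by simpa using hle i
        interval_cases h : μ i
        · simp [h]
        · exfalso
          apply hμ
          ext j
          by_cases hj : j = i
          · subst hj; simp [h]
          · have := hle j
            simp [Finsupp.single_apply, hj, Ne.symm hj] at this ⊢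
            omega
      · rw [if_neg h0]

lemma closure_coeff_zero {A : Set (MvPolynomial (Fin n) ℝ)} {μ : Fin n →₀ ℕ}
    (h : ∀ P ∈ A, P.coeff μ = 0) {W : MvPolynomial (Fin n) ℝ}
    (hW : W ∈ closureNorm A) : W.coeff μ = 0 := by
  by_contra h0
  obtain ⟨Q, hQ, hlt⟩ := hW |W.coeff μ| (abs_pos.2 h0)
  have h1 := abs_coeff_le_polyNorm (W - Q) μ
  rw [MvPolynomial.coeff_sub, h Q hQ, sub_zero] at h1
  exact absurd (h1.trans_lt hlt) (lt_irrefl _)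

lemma sigma_coeff_zero_zero {r s : ℕ} {P : MvPolynomial (Fin m) ℝ}
    (hP : P ∈ sigmaSet r s m) : P.coeff 0 = 0 := by
  obtain ⟨_, ⟨i, rfl⟩, ⟨hPs, _⟩⟩ := hP
  exact hPs.1

lemma sigma_coeff_high_zero {r s : ℕ} {P : MvPolynomial (Fin m) ℝ}
    (hP : P ∈ sigmaSet r s m) {μ : Fin m →₀ ℕ} (hμ : ¬ (∑ i, μ i) ≤ r) :
    P.coeff μ = 0 := by
  obtain ⟨_, ⟨i, rfl⟩, ⟨hPs, _⟩⟩ := hP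
  exact coeff_eq_zero_of_totalDegree hPs.2 hμ

lemma sigma_coeff_single_zero {r s : ℕ} {P : MvPolynomial (Fin m) ℝ}
    (hP : P ∈ sigmaSet r s m) (ℓ : Fin m) :
    P.coeff (Finsupp.single ℓ 1) = 0 := by
  obtain ⟨_, ⟨i, rfl⟩, ⟨hPs, a, hvan⟩⟩ := hP
  have h0 := hvan ℓ 0 (Nat.zero_le s)
  rw [iteratedDeriv_zero] at h0
  have hγ : truncCurve s i a 0 = 0 := by
    funext j
    simp [truncCurve]
  rw [hγ, MvPolynomial.eval_zero] at h0
  rw [← cc_pderiv_eq_coeff_single]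
  exact h0

end Aux

namespace Aux

lemma aeval_LS_LS {n m : ℕ} (A : Matrix (Fin n) (Fin m) ℝ)
    (hAA : ∀ j k : Fin m, ∑ i, A i j * A i k = (if j = k then (1:ℝ) else 0))
    (D : MvPolynomial (Fin m) ℝ) :
    aeval (LS (fun i j => A i j)) (aeval (LS (fun j i => A i j)) D) = D := by
  classical
  have hcomp := MvPolynomial.comp_aeval (f := LS (fun j i => A i j))
    (φ := aeval (LS (fun i j => A i j)))
  have hkey : (fun j => aeval (LS (fun i j => A i j)) (LS (fun j i => A i j) j)) =
      (X : Fin m → MvPolynomial (Fin m) ℝ) := by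
    funext j
    simp only [LS, _root_.map_sum, _root_.map_mul, MvPolynomial.aeval_C,
      MvPolynomial.aeval_X, MvPolynomial.algebraMap_eq]
    calc ∑ i, C (A i j) * ∑ k, C (A i k) * X k
        = ∑ i, ∑ k, C (A i j * A i k) * X k := by
          refine Finset.sum_congr rfl fun i _ => ?_
          rw [Finset.mul_sum]
          refine Finset.sum_congr rfl fun k _ => ?_
          rw [← mul_assoc, ← MvPolynomial.C_mul]
      _ = ∑ k, ∑ i, C (A i j * A i k) * X k := Finset.sum_comm
      _ = ∑ k : Fin m, C (∑ i, A i j * A i k) * X k := by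
          refine Finset.sum_congr rfl fun k _ => ?_
          rw [← Finset.sum_mul, ← _root_.map_sum]
      _ = ∑ k : Fin m, C (if j = k then (1:ℝ) else 0) * X k := by
          simp only [hAA]
      _ = X j := by
          simp [apply_ite (C : ℝ → MvPolynomial (Fin m) ℝ), ite_mul, Finset.sum_ite_eq]
  calc aeval (LS fun i j => A i j) (aeval (LS fun j i => A i j) D)
      = ((aeval (LS fun i j => A i j)).comp (aeval (LS fun j i => A i j))) D := rfl
    _ = aeval (fun j => aeval (LS fun i j => A i j) (LS (fun j i => A i j) j)) D := by
        rw [hcomp]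
    _ = aeval X D := by rw [hkey]
    _ = D := MvPolynomial.aeval_X_left_apply D

end Aux

-- MORE AUX HERE

/-- Stability of the distance to the bad sets under perturbation. -/
theorem statement2 (r' r n m s : ℕ) (hrr : r ≤ r') (hr : 2 ≤ r) (hn : 2 ≤ n)
    (hm : 1 ≤ m ∧ m ≤ n - 1) (hs : 1 ≤ s ∧ s ≤ r - 1) (τ : ℝ) (hτ : 0 < τ) :
    ∃ εstar > (0:ℝ), ∃ χ > (0:ℝ), ∃ ζ > (0:ℝ),
      ∀ Q ∈ PolySpaceStar r' n,
        (∀ V ∈ badV r s m n, τ < polyNorm (truncatePoly r Q - V)) →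
        ∀ ε ∈ Set.Icc (0:ℝ) εstar, ∀ S ∈ PolySpaceStar r' n, polyNorm (S - Q) ≤ ε →
          (∀ V ∈ badV r s m n, χ < polyNorm (truncatePoly r S - V)) ∧
          (∀ A : Matrix (Fin n) (Fin m) ℝ, Aᵀ * A = 1 →
            (∀ j : Fin m, (∑ i : Fin n, A i j * polyGrad S 0 i) = 0) →
            ∀ W ∈ SigmaCl r s m, ζ < polyNorm (restrictPoly A (truncatePoly r S) - W)) := by
  classical
  have hpg : ∀ (k : ℕ) (P : MvPolynomial (Fin k) ℝ) (i : Fin k),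
      polyGrad P 0 i = constantCoeff (pderiv i P) := by
    intro k P i
    show eval 0 (pderiv i P) = _
    rw [MvPolynomial.eval_zero]
  set N : ℕ := (Finset.Iic (Finsupp.equivFunOnFinite.symm (fun _ : Fin m => r))).card with hN
  have hNpos : 0 < N := Finset.card_pos.mpr ⟨0, by simp⟩
  have hn0 : (0:ℝ) < (n:ℝ) := by exact_mod_cast (by omega : 0 < n)
  set K : ℝ := (N : ℝ) * (n:ℝ) ^ r with hK
  have hKpos : 0 < K := by
    apply mul_pos
    · exact_mod_cast hNpos
    · exact pow_pos hn0 r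
  refine ⟨τ/2, by linarith, τ/2, by linarith, τ/(2*K), by positivity, ?_⟩
  intro Q hQ hfar ε hε S hS hSQ
  have hclaim1 : ∀ V ∈ badV r s m n, τ/2 < polyNorm (truncatePoly r S - V) := by
    intro V hV
    have h1 := hfar V hV
    have hQS : polyNorm (Q - S) ≤ ε := by
      rw [show Q - S = -(S - Q) by ring, Aux.polyNorm_neg]
      exact hSQ
    have h2 : polyNorm (truncatePoly r Q - truncatePoly r S) ≤ τ/2 := by
      refine le_trans (Aux.polyNorm_le (c := polyNorm (Q - S)) fun μ => ?_)
        (hQS.trans hε.2)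
      rw [MvPolynomial.coeff_sub, Aux.coeff_truncatePoly, Aux.coeff_truncatePoly]
      by_cases h : (∑ i, μ i) ≤ r
      · rw [if_pos h, if_pos h, ← MvPolynomial.coeff_sub]
        exact Aux.abs_coeff_le_polyNorm _ _
      · rw [if_neg h, if_neg h, sub_zero, abs_zero]
        exact Aux.polyNorm_nonneg _
    have h3 : polyNorm (truncatePoly r Q - V) ≤
        polyNorm (truncatePoly r Q - truncatePoly r S) + polyNorm (truncatePoly r S - V) := by
      rw [show truncatePoly r Q - V =
        (truncatePoly r Q - truncatePoly r S) + (truncatePoly r S - V) by ring]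
      exact Aux.polyNorm_add_le _ _
    linarith
  refine ⟨hclaim1, ?_⟩
  intro A hA horth W hW
  set g : Fin m → MvPolynomial (Fin n) ℝ := Aux.LS (fun j i => A i j) with hg
  set f : Fin n → MvPolynomial (Fin m) ℝ := Aux.LS (fun i j => A i j) with hf
  have hrestr : ∀ P, restrictPoly A P = aeval f P := fun P => rfl
  set TS := truncatePoly r S with hTS
  set D := restrictPoly A TS - W with hDdef
  set L := aeval g D with hLdef
  have hAA : ∀ j k : Fin m, ∑ i, A i j * A i k = (if j = k then (1:ℝ) else 0) := by
    intro j k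
    have h := congrFun (congrFun hA j) k
    rw [Matrix.mul_apply] at h
    simp only [Matrix.transpose_apply, Matrix.one_apply] at h
    exact h
  have habs : ∀ i j, |A i j| ≤ 1 := by
    intro i j
    rw [abs_le_one_iff_mul_self_le_one]
    have h := hAA j j
    rw [if_pos rfl] at h
    calc A i j * A i j ≤ ∑ i', A i' j * A i' j :=
          Finset.single_le_sum (f := fun i' => A i' j * A i' j)
            (fun _ _ => mul_self_nonneg _) (Finset.mem_univ i)
      _ = 1 := h
  have hW0 : W.coeff 0 = 0 :=
    Aux.closure_coeff_zero (fun P hP => Aux.sigma_coeff_zero_zero hP) hW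
  have hWdeg : W.totalDegree ≤ r :=
    Aux.totalDegree_le_of_coeff fun μ hμ =>
      Aux.closure_coeff_zero (fun P hP => Aux.sigma_coeff_high_zero hP hμ) hW
  have hWgrad : ∀ j, constantCoeff (pderiv j W) = 0 := fun j => by
    rw [Aux.cc_pderiv_eq_coeff_single]
    exact Aux.closure_coeff_zero (fun P hP => Aux.sigma_coeff_single_zero hP j) hW
  have hTSdeg : TS.totalDegree ≤ r := Aux.totalDegree_truncate_le r S
  have hfdeg : ∀ i, (f i).totalDegree ≤ 1 := Aux.LS_deg _
  have hgdeg : ∀ j, (g j).totalDegree ≤ 1 := Aux.LS_deg _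
  have hDdeg : D.totalDegree ≤ r := by
    rw [hDdef, hrestr]
    exact (Aux.totalDegree_sub_le _ _).trans
      (max_le ((Aux.totalDegree_aeval_le hfdeg TS).trans hTSdeg) hWdeg)
  have hgcc : ∀ j, constantCoeff (g j) = 0 := Aux.LS_cc _
  have hfcc : ∀ i, constantCoeff (f i) = 0 := Aux.LS_cc _
  have hS0 : S.coeff 0 = 0 := hS.1.1
  have hTS0 : constantCoeff TS = 0 := by
    rw [MvPolynomial.constantCoeff_eq]
    show (truncatePoly r S).coeff 0 = 0
    rw [Aux.coeff_truncatePoly]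
    simp [hS0]
  have hD0 : constantCoeff D = 0 := by
    rw [hDdef, hrestr, _root_.map_sub, Aux.constantCoeff_aeval_of_zero hfcc, hTS0,
      MvPolynomial.constantCoeff_eq]
    show (0:ℝ) - W.coeff 0 = 0
    rw [hW0, sub_zero]
  have hL0 : constantCoeff L = 0 := by
    rw [hLdef, Aux.constantCoeff_aeval_of_zero hgcc, hD0]
  have hsumsingle : ∀ (k : ℕ) (i : Fin k), (∑ i', (Finsupp.single i 1 : Fin k →₀ ℕ) i') = 1 := by
    intro k i
    simp [Finsupp.single_apply]
  have hgradTS : ∀ i, constantCoeff (pderiv i TS) = polyGrad S 0 i := by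
    intro i
    rw [Aux.cc_pderiv_eq_coeff_single, hTS, Aux.coeff_truncatePoly,
      if_pos (by rw [hsumsingle]; omega), ← Aux.cc_pderiv_eq_coeff_single, hpg]
  have hgradD : ∀ j, constantCoeff (pderiv j D) = 0 := by
    intro j
    rw [hDdef, hrestr, _root_.map_sub, _root_.map_sub, Aux.grad_aeval hfcc, hWgrad, sub_zero]
    have : ∀ i : Fin n, constantCoeff (pderiv j (f i)) = A i j := fun i =>
      Aux.LS_grad (fun i j => A i j) i j
    calc ∑ i, constantCoeff (pderiv j (f i)) * constantCoeff (pderiv i TS)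
        = ∑ i, A i j * polyGrad S 0 i := by
          refine Finset.sum_congr rfl fun i _ => ?_
          rw [this i, hgradTS i]
      _ = 0 := horth j
  have hgradL : ∀ i, constantCoeff (pderiv i L) = 0 := by
    intro i
    rw [hLdef, Aux.grad_aeval hgcc]
    simp [hgradD]
  set V := TS - L with hVdef
  have hVgrad : polyGrad V 0 = polyGrad S 0 := by
    funext i
    rw [hpg, hVdef, _root_.map_sub, _root_.map_sub, hgradTS i, hgradL i, sub_zero]
  have hVstar : V ∈ PolySpaceStar r n := by
    refine ⟨⟨?_, ?_⟩, ?_⟩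
    · show V.coeff 0 = 0
      rw [← MvPolynomial.constantCoeff_eq]
      show constantCoeff (TS - L) = 0
      rw [_root_.map_sub, hTS0, hL0, sub_zero]
    · exact (Aux.totalDegree_sub_le _ _).trans
        (max_le hTSdeg ((Aux.totalDegree_aeval_le hgdeg D).trans hDdeg))
    · rw [hVgrad]
      exact hS.2
  have hfLD : aeval f L = D := by
    rw [hLdef, hg, hf]
    exact Aux.aeval_LS_LS A hAA D
  have hrV : restrictPoly A V = W := by
    rw [hrestr, hVdef, _root_.map_sub, hfLD, ← hrestr, hDdef]
    ring
  have hVbad : V ∈ badV r s m n := ⟨hVstar, A, hA, by rw [hrV]; exact hW⟩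
  have h6 : τ/2 < polyNorm L := by
    have h := hclaim1 V hVbad
    rw [show truncatePoly r S - V = L by rw [hVdef, hTS]; ring] at h
    exact h
  have hgl1 : ∀ j, Aux.l1 (g j) ≤ (n:ℝ) := fun j =>
    Aux.LS_l1 (fun j i => A i j) j (fun i => habs i j)
  have h7 : polyNorm L ≤ K * polyNorm D := by
    refine (Aux.polyNorm_le_l1 L).trans ?_
    rw [hLdef]
    refine le_trans (Aux.l1_aeval_le (by exact_mod_cast (by omega : 1 ≤ n)) hgl1 hDdeg)
      (le_of_eq ?_)
    rw [hK, hN]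
  have h8 : τ/2 < K * polyNorm D := h6.trans_le h7
  rw [div_lt_iff₀ (by positivity)]
  rw [show polyNorm (restrictPoly A (truncatePoly r S) - W) * (2*K)
    = 2 * (K * polyNorm D) by rw [hDdef, hTS]; ring]
  linarith

end
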